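/- Let p be a prime, f ∈ ℤ[x,y] a polynomial with integer coefficients and nonzero constant term, and (r₁,s₁), (r₂,s₂) integer points with p ∣ f(r₁,s₁) and p ∣ f(r₂,s₂). Assume f_x(r₁,s₁)·f_y(r₂,s₂) − f_y(r₁,s₁)·f_x(r₂,s₂) ≢ 0 (mod p). Then the number of pairs (k,l) ∈ {0,1,…,p−1}² such that p² ∣ f(r₁+kp, s₁+lp) while p ∣ f(r₂+kp, s₂+lp) and p² ∤ f(r₂+kp, s₂+lp) equals p−1. -/

import Mathlib

open MvPolynomial Finset

lemma taylor2 (p r s k l : ℤ) (f : MvPolynomial (Fin 2) ℤ) :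
    p ^ 2 ∣ eval ![r + k * p, s + l * p] f - eval ![r, s] f
      - p * (k * eval ![r, s] (pderiv 0 f) + l * eval ![r, s] (pderiv 1 f)) := by
  induction f using MvPolynomial.induction_on with
  | C a => simp
  | add f g hf hg =>
      have := Dvd.dvd.add hf hg
      simp only [map_add] at *
      convert this using 1
      · rfl
      ring
  | mul_X f i hf =>
      have hmod : p ∣ eval ![r + k * p, s + l * p] f - eval ![r, s] f := by
        obtain ⟨m, hm⟩ := hf
        refine ⟨(k * eval ![r, s] (pderiv 0 f) + l * eval ![r, s] (pderiv 1 f)) + p * m, ?_⟩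
        have : eval ![r + k * p, s + l * p] f - eval ![r, s] f
            = p * (k * eval ![r, s] (pderiv 0 f) + l * eval ![r, s] (pderiv 1 f)) + p ^ 2 * m := by
          linarith [hm]
        rw [this]; ring
      obtain ⟨m, hm⟩ := hf
      obtain ⟨n, hn⟩ := hmod
      fin_cases i
      · simp only [map_mul, eval_X, pderiv_mul, pderiv_X, map_add]
        simp
        refine ⟨m * r + k * n, ?_⟩
        linear_combination r * hm + k * p * hn
      · simp only [map_mul, eval_X, pderiv_mul, pderiv_X, map_add]
        simp
        refine ⟨m * s + l * n, ?_⟩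
        linear_combination s * hm + l * p * hn

lemma expand_eval (p r s c a b : ℤ) (f : MvPolynomial (Fin 2) ℤ)
    (hc : eval ![r, s] f = p * c)
    (ha : a = eval ![r, s] (pderiv 0 f)) (hb : b = eval ![r, s] (pderiv 1 f))
    (k l : ℤ) :
    ∃ m : ℤ, eval ![r + k * p, s + l * p] f = p * (c + k * a + l * b) + p ^ 2 * m := by
  obtain ⟨m, hm⟩ := taylor2 p r s k l f
  exact ⟨m, by subst ha hb; linear_combination hm + hc⟩

theorem stmt_4 (p : ℕ) (hp : p.Prime) (f : MvPolynomial (Fin 2) ℤ)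
    (hconst : MvPolynomial.coeff 0 f ≠ 0) (r₁ s₁ r₂ s₂ : ℤ)
    (h₁ : (p : ℤ) ∣ MvPolynomial.eval ![r₁, s₁] f)
    (h₂ : (p : ℤ) ∣ MvPolynomial.eval ![r₂, s₂] f)
    (hdet : ¬ (p : ℤ) ∣
      (MvPolynomial.eval ![r₁, s₁] (MvPolynomial.pderiv 0 f) *
        MvPolynomial.eval ![r₂, s₂] (MvPolynomial.pderiv 1 f) -
       MvPolynomial.eval ![r₁, s₁] (MvPolynomial.pderiv 1 f) *
        MvPolynomial.eval ![r₂, s₂] (MvPolynomial.pderiv 0 f))) :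
    ((Finset.range p ×ˢ Finset.range p).filter (fun kl : ℕ × ℕ =>
        ((p : ℤ) ^ 2 ∣ MvPolynomial.eval ![r₁ + (kl.1 : ℤ) * p, s₁ + (kl.2 : ℤ) * p] f) ∧
        ((p : ℤ) ∣ MvPolynomial.eval ![r₂ + (kl.1 : ℤ) * p, s₂ + (kl.2 : ℤ) * p] f ∧
          ¬ ((p : ℤ) ^ 2 ∣ MvPolynomial.eval ![r₂ + (kl.1 : ℤ) * p, s₂ + (kl.2 : ℤ) * p] f)))).card
      = p - 1 := by
  classical
  haveI : Fact p.Prime := ⟨hp⟩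
  have hP0 : (p : ℤ) ≠ 0 := Int.natCast_ne_zero.mpr hp.pos.ne'
  obtain ⟨c₁, hc₁⟩ := h₁
  obtain ⟨c₂, hc₂⟩ := h₂
  set a₁ := eval ![r₁, s₁] (pderiv 0 f) with ha₁
  set b₁ := eval ![r₁, s₁] (pderiv 1 f) with hb₁
  set a₂ := eval ![r₂, s₂] (pderiv 0 f) with ha₂
  set b₂ := eval ![r₂, s₂] (pderiv 1 f) with hb₂
  -- key divisibility characterizations
  have key : ∀ (r s c a b : ℤ), eval ![r, s] f = (p:ℤ) * c →
      a = eval ![r, s] (pderiv 0 f) → b = eval ![r, s] (pderiv 1 f) →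
      ∀ k l : ℤ, ((p:ℤ) ∣ eval ![r + k * p, s + l * p] f) ∧
        (((p:ℤ) ^ 2 ∣ eval ![r + k * p, s + l * p] f) ↔ ((p:ℤ) ∣ c + k * a + l * b)) := by
    intro r s c a b hc ha hb k l
    obtain ⟨m, hm⟩ := expand_eval p r s c a b f hc ha hb k l
    rw [hm]
    constructor
    · exact Dvd.dvd.add (Dvd.intro _ rfl) ⟨p * m, by ring⟩
    · rw [dvd_add_left (Dvd.intro m rfl), pow_two, mul_dvd_mul_iff_left hP0]
  -- move to ZMod p
  set C₁ : ZMod p := (c₁ : ZMod p)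
  set C₂ : ZMod p := (c₂ : ZMod p)
  set A₁ : ZMod p := ((a₁ : ℤ) : ZMod p)
  set B₁ : ZMod p := ((b₁ : ℤ) : ZMod p)
  set A₂ : ZMod p := ((a₂ : ℤ) : ZMod p)
  set B₂ : ZMod p := ((b₂ : ℤ) : ZMod p)
  have hD : A₁ * B₂ - B₁ * A₂ ≠ 0 := by
    intro h
    apply hdet
    have := (ZMod.intCast_zmod_eq_zero_iff_dvd (a₁ * b₂ - b₁ * a₂) p).mp (by push_cast; exact h)
    exact this
  have hfilter : (Finset.range p ×ˢ Finset.range p).filter (fun kl : ℕ × ℕ =>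
        ((p : ℤ) ^ 2 ∣ MvPolynomial.eval ![r₁ + (kl.1 : ℤ) * p, s₁ + (kl.2 : ℤ) * p] f) ∧
        ((p : ℤ) ∣ MvPolynomial.eval ![r₂ + (kl.1 : ℤ) * p, s₂ + (kl.2 : ℤ) * p] f ∧
          ¬ ((p : ℤ) ^ 2 ∣ MvPolynomial.eval ![r₂ + (kl.1 : ℤ) * p, s₂ + (kl.2 : ℤ) * p] f)))
      = (Finset.range p ×ˢ Finset.range p).filter (fun kl : ℕ × ℕ =>
          (A₁ * (kl.1 : ZMod p) + B₁ * (kl.2 : ZMod p) = -C₁) ∧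
          (A₂ * (kl.1 : ZMod p) + B₂ * (kl.2 : ZMod p) ≠ -C₂)) := by
    apply Finset.filter_congr
    intro kl _
    obtain ⟨k, l⟩ := kl
    have K1 := key r₁ s₁ c₁ a₁ b₁ hc₁ rfl rfl k l
    have K2 := key r₂ s₂ c₂ a₂ b₂ hc₂ rfl rfl k l
    have cast1 : ((p:ℤ) ∣ c₁ + (k:ℤ) * a₁ + (l:ℤ) * b₁) ↔
        (A₁ * (k : ZMod p) + B₁ * (l : ZMod p) = -C₁) := by
      rw [← ZMod.intCast_zmod_eq_zero_iff_dvd]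
      push_cast
      constructor <;> intro h <;> linear_combination h
    have cast2 : ((p:ℤ) ∣ c₂ + (k:ℤ) * a₂ + (l:ℤ) * b₂) ↔
        (A₂ * (k : ZMod p) + B₂ * (l : ZMod p) = -C₂) := by
      rw [← ZMod.intCast_zmod_eq_zero_iff_dvd]
      push_cast
      constructor <;> intro h <;> linear_combination h
    simp only [K1.2, K2.2, cast1, cast2]
    tauto
  rw [hfilter]
  -- bijection with target set
  have hcard : ((Finset.range p ×ˢ Finset.range p).filter (fun kl : ℕ × ℕ =>
          (A₁ * (kl.1 : ZMod p) + B₁ * (kl.2 : ZMod p) = -C₁) ∧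
          (A₂ * (kl.1 : ZMod p) + B₂ * (kl.2 : ZMod p) ≠ -C₂))).card
      = (Finset.univ.filter (fun uv : ZMod p × ZMod p => uv.1 = -C₁ ∧ uv.2 ≠ -C₂)).card := by
    apply Finset.card_bij (fun kl _ =>
      (A₁ * (kl.1 : ZMod p) + B₁ * (kl.2 : ZMod p), A₂ * (kl.1 : ZMod p) + B₂ * (kl.2 : ZMod p)))
    · intro kl hkl
      simp only [Finset.mem_filter] at hkl ⊢
      exact ⟨Finset.mem_univ _, hkl.2⟩
    · intro kl hkl kl' hkl' heq
      simp only [Finset.mem_filter, Finset.mem_product, Finset.mem_range] at hkl hkl'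
      obtain ⟨⟨hk, hl⟩, -⟩ := hkl
      obtain ⟨⟨hk', hl'⟩, -⟩ := hkl'
      have h1 : A₁ * (kl.1 : ZMod p) + B₁ * (kl.2 : ZMod p)
          = A₁ * (kl'.1 : ZMod p) + B₁ * (kl'.2 : ZMod p) := congrArg Prod.fst heq
      have h2 : A₂ * (kl.1 : ZMod p) + B₂ * (kl.2 : ZMod p)
          = A₂ * (kl'.1 : ZMod p) + B₂ * (kl'.2 : ZMod p) := congrArg Prod.snd heq
      have hkk : ((kl.1 : ZMod p)) = (kl'.1 : ZMod p) := by
        have : (A₁ * B₂ - B₁ * A₂) * ((kl.1 : ZMod p) - (kl'.1 : ZMod p)) = 0 := by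
          linear_combination B₂ * h1 - B₁ * h2
        rcases mul_eq_zero.mp this with h | h
        · exact absurd h hD
        · linear_combination h
      have hll : ((kl.2 : ZMod p)) = (kl'.2 : ZMod p) := by
        have : (A₁ * B₂ - B₁ * A₂) * ((kl.2 : ZMod p) - (kl'.2 : ZMod p)) = 0 := by
          linear_combination A₁ * h2 - A₂ * h1
        rcases mul_eq_zero.mp this with h | h
        · exact absurd h hD
        · linear_combination h
      have e1 : kl.1 = kl'.1 := by
        have := congrArg ZMod.val hkk
        rwa [ZMod.val_cast_of_lt hk, ZMod.val_cast_of_lt hk'] at this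
      have e2 : kl.2 = kl'.2 := by
        have := congrArg ZMod.val hll
        rwa [ZMod.val_cast_of_lt hl, ZMod.val_cast_of_lt hl'] at this
      exact Prod.ext e1 e2
    · intro xy hxy
      simp only [Finset.mem_filter, Finset.mem_univ, true_and] at hxy
      obtain ⟨x, y⟩ := xy
      obtain ⟨hx, hy⟩ := hxy
      set D : ZMod p := A₁ * B₂ - B₁ * A₂
      have hDinv : D * D⁻¹ = 1 := mul_inv_cancel₀ hD
      set u : ZMod p := D⁻¹ * (B₂ * x - B₁ * y)
      set v : ZMod p := D⁻¹ * (A₁ * y - A₂ * x)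
      refine ⟨(u.val, v.val), ?_, ?_⟩
      · simp only [Finset.mem_filter, Finset.mem_product, Finset.mem_range]
        have hu : ((u.val : ℕ) : ZMod p) = u := by simp [ZMod.natCast_val, ZMod.cast_id]
        have hv : ((v.val : ℕ) : ZMod p) = v := by simp [ZMod.natCast_val, ZMod.cast_id]
        have hux : A₁ * u + B₁ * v = x := by
          simp only [u, v, D] at *
          linear_combination x * hDinv
        have hvy : A₂ * u + B₂ * v = y := by
          simp only [u, v, D] at *
          linear_combination y * hDinv
        refine ⟨⟨ZMod.val_lt u, ZMod.val_lt v⟩, ?_, ?_⟩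
        · rw [hu, hv, hux]; exact hx
        · rw [hu, hv, hvy]; exact hy
      · have hu : ((u.val : ℕ) : ZMod p) = u := by simp [ZMod.natCast_val, ZMod.cast_id]
        have hv : ((v.val : ℕ) : ZMod p) = v := by simp [ZMod.natCast_val, ZMod.cast_id]
        have hux : A₁ * u + B₁ * v = x := by
          simp only [u, v, D] at *
          linear_combination x * hDinv
        have hvy : A₂ * u + B₂ * v = y := by
          simp only [u, v, D] at *
          linear_combination y * hDinv
        simp only [hu, hv, hux, hvy]
  rw [hcard]
  have : (Finset.univ.filter (fun uv : ZMod p × ZMod p => uv.1 = -C₁ ∧ uv.2 ≠ -C₂))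
      = {-C₁} ×ˢ ({-C₂}ᶜ : Finset (ZMod p)) := by
    ext ⟨u, v⟩
    simp only [Finset.mem_filter, Finset.mem_univ, true_and, Finset.mem_product,
      Finset.mem_singleton, Finset.mem_compl]
  rw [this, Finset.card_product, Finset.card_singleton, one_mul, Finset.card_compl,
    Finset.card_singleton, ZMod.card]
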